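/- For 0 < q < 1, z > 0, and n ≥ 1, the difference J_{n-1}(q;z)·J_{n+1}(q;z) - (J_n(q;z))^2 equals Σ_{j=n+2}^∞ q^{(n(n-1)+(j-1)(j-2))/2} (q^{j-1} - q^n) / ((q;q)_{n+1}(q;q)_j) · z^{j+n}, and every term of this series is negative. -/

import Mathlib

open Finset Filter Topology

noncomputable def qPoch (q : ℝ) (m : ℕ) : ℝ := ∏ j ∈ Finset.range m, (1 - q ^ (j + 1))

/-- Tail of the q-exponential e(q;z) starting at index m; I_n(q;z) = qexpTail q z (n+1). -/
noncomputable def qexpTail (q z : ℝ) (m : ℕ) : ℝ := ∑' k : ℕ, z ^ (m + k) / qPoch q (m + k)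

/-- Tail of the q-exponential E(q;z) starting at index m; J_n(q;z) = qExpTail q z (n+1). -/
noncomputable def qExpTail (q z : ℝ) (m : ℕ) : ℝ :=
  ∑' k : ℕ, q ^ ((m + k) * (m + k - 1) / 2) * z ^ (m + k) / qPoch q (m + k)

noncomputable def Fq (q z : ℝ) (m k : ℕ) : ℝ :=
  q ^ ((m + 1 + k) * (m + k) / 2) * z ^ (m + 1 + k) / qPoch q (m + 1 + k)

lemma qPoch_pos {q : ℝ} (hq0 : 0 ≤ q) (hq1 : q < 1) (m : ℕ) : 0 < qPoch q m := by
  apply Finset.prod_pos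
  intro j _
  have : q ^ (j + 1) < 1 := pow_lt_one₀ hq0 hq1 (by omega)
  linarith

lemma qPoch_succ (q : ℝ) (m : ℕ) : qPoch q (m + 1) = qPoch q m * (1 - q ^ (m + 1)) := by
  simp [qPoch, Finset.prod_range_succ]

lemma tri_step (a : ℕ) : (a + 2) * (a + 1) / 2 = (a + 1) * a / 2 + (a + 1) := by
  have h : (a + 2) * (a + 1) = (a + 1) * a + (a + 1) * 2 := by ring
  rw [h, Nat.add_mul_div_right _ _ (by norm_num)]

lemma two_dvd_tri (a : ℕ) : 2 ∣ (a + 1) * a := by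
  rcases Nat.even_mul_succ_self a with ⟨c, hc⟩
  exact ⟨c, by rw [mul_comm, hc, two_mul]⟩

lemma summable_Fq {q z : ℝ} (hq0 : 0 < q) (hq1 : q < 1) (hz : 0 < z) (m : ℕ) :
    Summable (Fq q z m) := by
  have hP := fun j => qPoch_pos hq0.le hq1 j
  apply summable_of_ratio_norm_eventually_le (r := 1/2) (by norm_num)
  have hq' : Tendsto (fun k : ℕ => q ^ (m + 1 + k) * z) atTop (𝓝 0) := by
    have : Tendsto (fun k : ℕ => q ^ k) atTop (𝓝 0) :=
      tendsto_pow_atTop_nhds_zero_of_lt_one hq0.le hq1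
    have h2 : Tendsto (fun k : ℕ => q ^ (m + 1) * q ^ k * z) atTop (𝓝 (q ^ (m+1) * 0 * z)) :=
      ((this.const_mul _).mul_const _)
    simpa [pow_add, mul_comm, mul_assoc] using h2
  have hev : ∀ᶠ k : ℕ in atTop, q ^ (m + 1 + k) * z ≤ (1/2) * (1 - q) := by
    have := hq'.eventually_le_const (show (0:ℝ) < (1/2)*(1-q) by nlinarith)
    exact this
  filter_upwards [hev] with k hk
  have hFpos : ∀ j, 0 < Fq q z m j := by
    intro j
    exact div_pos (mul_pos (pow_pos hq0 _) (pow_pos hz _)) (hP _)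
  rw [Real.norm_of_nonneg (hFpos _).le, Real.norm_of_nonneg (hFpos _).le]
  have hrec : Fq q z m (k + 1) = Fq q z m k * (q ^ (m + 1 + k) * z / (1 - q ^ (m + 1 + (k+1)))) := by
    unfold Fq
    have e1 : m + 1 + (k + 1) = (m + k) + 2 := by omega
    have e2 : m + (k + 1) = (m + k) + 1 := by omega
    rw [e1, e2, tri_step (m + k), qPoch_succ]
    have e3 : m + 1 + k = m + k + 1 := by omega
    rw [e3, pow_add, pow_add]
    have h1 : (0:ℝ) < qPoch q (m + k + 1) := hP _
    have h2 : (0:ℝ) < 1 - q ^ (m + k + 1 + 1) := by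
      have : q ^ (m + k + 1 + 1) < 1 := pow_lt_one₀ hq0.le hq1 (by omega)
      linarith
    field_simp
    ring
  rw [hrec]
  have h2 : (0:ℝ) < 1 - q ^ (m + 1 + (k + 1)) := by
    have : q ^ (m + 1 + (k+1)) < 1 := pow_lt_one₀ hq0.le hq1 (by omega)
    linarith
  have hq1' : 1 - q ≤ 1 - q ^ (m + 1 + (k + 1)) := by
    have h := pow_le_pow_of_le_one hq0.le hq1.le (show 1 ≤ m + 1 + (k + 1) by omega)
    simp only [pow_one] at h
    linarith
  have : q ^ (m + 1 + k) * z / (1 - q ^ (m + 1 + (k + 1))) ≤ 1/2 := by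
    rw [div_le_iff₀ h2]
    calc q ^ (m + 1 + k) * z ≤ (1/2) * (1 - q) := hk
    _ ≤ 1/2 * (1 - q ^ (m + 1 + (k + 1))) := by nlinarith
  calc Fq q z m k * (q ^ (m + 1 + k) * z / (1 - q ^ (m + 1 + (k + 1))))
      ≤ Fq q z m k * (1/2) := by
        exact mul_le_mul_of_nonneg_left this (hFpos k).le
    _ = 1/2 * Fq q z m k := by ring

lemma qExpTail_eq (q z : ℝ) (m : ℕ) : qExpTail q z (m + 1) = ∑' k, Fq q z m k := by
  unfold qExpTail Fq
  apply tsum_congr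
  intro k
  rw [show m + 1 + k - 1 = m + k from by omega]

lemma Fq_shift (q z : ℝ) (m k : ℕ) : Fq q z m (k + 1) = Fq q z (m + 1) k := by
  unfold Fq
  have e1 : m + 1 + (k + 1) = m + 1 + 1 + k := by omega
  have e2 : m + (k + 1) = m + 1 + k := by omega
  rw [e1, e2]

lemma tail_rec {q z : ℝ} (hq0 : 0 < q) (hq1 : q < 1) (hz : 0 < z) (m : ℕ) :
    qExpTail q z (m + 1) = Fq q z m 0 + qExpTail q z (m + 2) := by
  rw [qExpTail_eq, Summable.tsum_eq_zero_add (summable_Fq hq0 hq1 hz m)]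
  congr 1
  rw [show m + 2 = (m + 1) + 1 from rfl, qExpTail_eq]
  exact tsum_congr fun k => Fq_shift q z m k

lemma key {q z : ℝ} (hq0 : 0 < q) (hq1 : q < 1) (m k : ℕ) :
    q ^ (((m+1) * (m+1-1) + (m+1+1+k) * (m+1+k)) / 2) * (q ^ (m+1+1+k) - q ^ (m+1)) /
        (qPoch q (m+1+1) * qPoch q (m+1+2+k)) * z ^ (m+1+2+k+(m+1))
    = Fq q z m 0 * Fq q z (m+1+1) k - Fq q z (m+1) 0 * Fq q z (m+1) k := by
  obtain ⟨a, ha⟩ : 2 ∣ (m+1)*m := two_dvd_tri m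
  obtain ⟨b, hb⟩ : 2 ∣ (m+1+1+k)*(m+1+k) := by
    obtain ⟨c, hc⟩ := two_dvd_tri (m+1+k)
    exact ⟨c, by rw [show m+1+1+k = m+1+k+1 from by omega, hc]⟩
  unfold Fq
  have e0 : m + 1 - 1 = m := rfl
  have E1 : ((m+1) * (m+1-1) + (m+1+1+k) * (m+1+k)) / 2 = a + b := by
    rw [e0, ha, hb]; omega
  have E2 : (m+1+0) * (m+0) / 2 = a := by
    rw [show m+1+0 = m+1 from rfl, show m+0 = m from rfl, ha]; omega
  have E3 : (m+1+1+1+k) * (m+1+1+k) / 2 = b + (m+2+k) := by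
    have h : (m+1+1+1+k) * (m+1+1+k) = (m+1+1+k)*(m+1+k) + (m+1+1+k)*2 := by ring
    rw [h, hb]; omega
  have E4 : (m+1+1+0) * (m+1+0) / 2 = a + (m+1) := by
    have h : (m+1+1+0) * (m+1+0) = (m+1)*m + (m+1)*2 := by ring
    rw [h, ha]; omega
  have E5 : (m+1+1+k) * (m+1+k) / 2 = b := by rw [hb]; omega
  rw [E1, E2, E3, E4, E5]
  rw [show m+1+2+k = m+1+1+k+1 from by omega,
      show m+1+0 = m+1 from rfl, show m+1+1+0 = m+1+1 from rfl]
  rw [qPoch_succ q (m+1), qPoch_succ q (m+1+1+k)]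
  have hp : (0:ℝ) < qPoch q (m+1) := qPoch_pos hq0.le hq1 _
  have hr : (0:ℝ) < qPoch q (m+1+1+k) := qPoch_pos hq0.le hq1 _
  have h1 : (0:ℝ) < 1 - q ^ (m+1+1) := by
    have : q ^ (m+1+1) < 1 := pow_lt_one₀ hq0.le hq1 (by omega); linarith
  have h2 : (0:ℝ) < 1 - q ^ (m+1+1+k+1) := by
    have : q ^ (m+1+1+k+1) < 1 := pow_lt_one₀ hq0.le hq1 (by omega); linarith
  field_simp
  ring

theorem J_turan_difference (q z : ℝ) (n : ℕ) (hq0 : 0 < q) (hq1 : q < 1)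
    (hz : 0 < z) (hn : 1 ≤ n) :
    (qExpTail q z n * qExpTail q z (n + 2) - (qExpTail q z (n + 1)) ^ 2 =
      ∑' k : ℕ, q ^ ((n * (n - 1) + (n + 1 + k) * (n + k)) / 2) *
        (q ^ (n + 1 + k) - q ^ n) / (qPoch q (n + 1) * qPoch q (n + 2 + k)) *
        z ^ (n + 2 + k + n)) ∧
    ∀ k : ℕ, q ^ ((n * (n - 1) + (n + 1 + k) * (n + k)) / 2) *
        (q ^ (n + 1 + k) - q ^ n) / (qPoch q (n + 1) * qPoch q (n + 2 + k)) *
        z ^ (n + 2 + k + n) < 0 := by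
  constructor
  · obtain ⟨m, rfl⟩ : ∃ m, n = m + 1 := ⟨n - 1, by omega⟩
    have hS1 := summable_Fq hq0 hq1 hz (m+1)
    have hS2 := summable_Fq hq0 hq1 hz (m+1+1)
    have hsum : (∑' k : ℕ, q ^ (((m+1) * (m+1-1) + (m+1+1+k) * (m+1+k)) / 2) *
        (q ^ (m+1+1+k) - q ^ (m+1)) / (qPoch q (m+1+1) * qPoch q (m+1+2+k)) *
        z ^ (m+1+2+k+(m+1)))
        = ∑' k : ℕ, (Fq q z m 0 * Fq q z (m+1+1) k - Fq q z (m+1) 0 * Fq q z (m+1) k) :=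
      tsum_congr fun k => key hq0 hq1 m k
    rw [hsum, Summable.tsum_sub (hS2.mul_left _) (hS1.mul_left _), tsum_mul_left, tsum_mul_left]
    have e3 : (∑' k, Fq q z (m+1+1) k) = qExpTail q z (m+1+2) := (qExpTail_eq q z (m+1+1)).symm
    have e4 : (∑' k, Fq q z (m+1) k) = qExpTail q z (m+1+1) := (qExpTail_eq q z (m+1)).symm
    have h1 : qExpTail q z (m+1) = Fq q z m 0 + qExpTail q z (m+1+1) := tail_rec hq0 hq1 hz m
    have h2 : qExpTail q z (m+1+1) = Fq q z (m+1) 0 + qExpTail q z (m+1+2) :=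
      tail_rec hq0 hq1 hz (m+1)
    rw [e3, e4, h1, h2]
    ring
  · intro k
    have hlt : q ^ (n + 1 + k) < q ^ n := pow_lt_pow_right_of_lt_one₀ hq0 hq1 (by omega)
    have hnum : q ^ ((n * (n - 1) + (n + 1 + k) * (n + k)) / 2) * (q ^ (n + 1 + k) - q ^ n) < 0 :=
      mul_neg_of_pos_of_neg (pow_pos hq0 _) (by linarith)
    have hden : (0:ℝ) < qPoch q (n + 1) * qPoch q (n + 2 + k) :=
      mul_pos (qPoch_pos hq0.le hq1 _) (qPoch_pos hq0.le hq1 _)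
    exact mul_neg_of_neg_of_pos (div_neg_of_neg_of_pos hnum hden) (pow_pos hz _)
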